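/- Suppose S, E, I_1, …, I_N : ℝ → ℝ are differentiable, satisfy the SEIR system with N parallel infectious stages for all t ≥ t₀, and S(t), E(t), I_i(t) ≥ 0 for all t ≥ t₀. If 0 < S(t₀) < S̄, then λ₁(S(t₀)) < 0 and there exists a constant C > 0 such that for all t ≥ t₀ one has √(E(t)² + Σ_{i=1}^N I_i(t)²) ≤ C · exp(λ₁(S(t₀)) · (t − t₀)); in particular E(t) and every I_i(t) tend to 0 exponentially fast as t → ∞ (the non-outbreak condition). -/

import Mathlib

open Filter

set_option maxHeartbeats 1600000 in
/-- the non-outbreak condition for the SEIR model with `N` parallel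
infectious stages: if `S(t₀) < S̄` then `λ₁(S(t₀)) < 0` and the "infected" part of
the solution decays exponentially fast. -/
theorem stmt_0
    (N : ℕ) [NeZero N]
    (σ : ℝ) (hσ : 0 < σ)
    (γ β x : Fin N → ℝ)
    (hγ : ∀ i, 0 < γ i) (hβ : ∀ i, 0 < β i) (hx : ∀ i, 0 < x i)
    (hxsum : ∑ i, x i = 1)
    (S E R : ℝ → ℝ) (I : Fin N → ℝ → ℝ) (t₀ : ℝ)
    (hS : ∀ t ≥ t₀, HasDerivAt S (-(∑ i, β i * I i t) * S t) t)
    (hE : ∀ t ≥ t₀, HasDerivAt E ((∑ i, β i * I i t) * S t - σ * E t) t)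
    (hI : ∀ i, ∀ t ≥ t₀, HasDerivAt (I i) (x i * σ * E t - γ i * I i t) t)
    (hR : ∀ t ≥ t₀, HasDerivAt R (∑ i, γ i * I i t) t)
    (hSnn : ∀ t ≥ t₀, 0 ≤ S t) (hEnn : ∀ t ≥ t₀, 0 ≤ E t)
    (hInn : ∀ i, ∀ t ≥ t₀, 0 ≤ I i t)
    (γmin : ℝ) (hγmin : γmin = Finset.univ.inf' Finset.univ_nonempty γ)
    (Sbar : ℝ) (hSbar : Sbar = γmin * (∑ i, x i * β i)⁻¹)
    (lam1 : ℝ → ℝ)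
    (hlam1 : ∀ S₀, lam1 S₀ = -(σ + γmin) / 2
      + (1 / 2) * Real.sqrt (4 * σ * (∑ i, β i * x i) * S₀ + (γmin - σ) ^ 2))
    (hS0pos : 0 < S t₀) (hS0lt : S t₀ < Sbar) :
    lam1 (S t₀) < 0 ∧
    (∃ C > 0, ∀ t ≥ t₀,
      Real.sqrt ((E t) ^ 2 + ∑ i, (I i t) ^ 2)
        ≤ C * Real.exp (lam1 (S t₀) * (t - t₀))) ∧
    Tendsto E atTop (nhds 0) ∧ ∀ i, Tendsto (I i) atTop (nhds 0) := by
  -- basic notation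
  set S₀ := S t₀ with hS₀def
  set b : ℝ := ∑ i, β i * x i with hbdef
  set L : ℝ := lam1 S₀ with hLdef
  have hγm_le : ∀ i, γmin ≤ γ i := by
    intro i
    rw [hγmin]
    exact Finset.inf'_le _ (Finset.mem_univ i)
  have hγm_pos : 0 < γmin := by
    rw [hγmin, Finset.lt_inf'_iff]
    exact fun i _ => hγ i
  have hb_pos : 0 < b := Finset.sum_pos (fun i _ => mul_pos (hβ i) (hx i)) Finset.univ_nonempty
  have hb_comm : (∑ i, x i * β i) = b := by
    rw [hbdef]
    exact Finset.sum_congr rfl fun i _ => mul_comm _ _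
  -- S₀ * b < γmin
  have hS0b : S₀ * b < γmin := by
    have h := hS0lt
    rw [hSbar, hb_comm] at h
    have h2 := mul_lt_mul_of_pos_right h hb_pos
    rwa [mul_assoc, inv_mul_cancel₀ hb_pos.ne', mul_one] at h2
  set D : ℝ := 4 * σ * b * S₀ + (γmin - σ) ^ 2 with hDdef
  have hD_pos : 0 < D := by
    have : 0 < 4 * σ * b * S₀ := by positivity
    positivity
  have hLform : L = -(σ + γmin) / 2 + (1 / 2) * Real.sqrt D := by
    rw [hLdef, hlam1 S₀]
  have hsqD : Real.sqrt D ^ 2 = D := Real.sq_sqrt hD_pos.le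
  -- L < 0
  have hL_neg : L < 0 := by
    have hlt : Real.sqrt D < σ + γmin := by
      rw [Real.sqrt_lt' (by positivity)]
      nlinarith [hS0b, hσ]
    rw [hLform]; linarith
  -- L + γmin > 0
  have hLγ_pos : 0 < L + γmin := by
    have h1 : Real.sqrt ((γmin - σ) ^ 2) < Real.sqrt D := by
      apply Real.sqrt_lt_sqrt (sq_nonneg _)
      have : 0 < 4 * σ * b * S₀ := by positivity
      rw [hDdef]; linarith
    rw [Real.sqrt_sq_eq_abs] at h1
    have h2 := neg_abs_le (γmin - σ)
    rw [hLform]; linarith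
  -- eigenvalue equation
  have heig : (L + σ) * (L + γmin) = σ * b * S₀ := by
    have h2L : 2 * L + (σ + γmin) = Real.sqrt D := by rw [hLform]; ring
    have := hsqD
    nlinarith [h2L, this]
  set p : ℝ := (L + γmin) / S₀ with hpdef
  have hp_pos : 0 < p := div_pos hLγ_pos hS0pos
  have hpS0 : p * S₀ = L + γmin := div_mul_cancel₀ _ hS0pos.ne'
  have hσb : σ * b = (L + σ) * p := by
    rw [hpdef]
    field_simp
    linarith [heig]
  -- J and W
  set J : ℝ → ℝ := fun t => ∑ i, β i * I i t with hJdef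
  set W : ℝ → ℝ := fun t => p * E t + J t with hWdef
  have hJnn : ∀ t ≥ t₀, 0 ≤ J t := fun t ht =>
    Finset.sum_nonneg fun i _ => mul_nonneg (hβ i).le (hInn i t ht)
  have hWnn : ∀ t ≥ t₀, 0 ≤ W t := fun t ht =>
    add_nonneg (mul_nonneg hp_pos.le (hEnn t ht)) (hJnn t ht)
  clear_value S₀ b L D p J W
  -- S is nonincreasing
  have hSle : ∀ t ≥ t₀, S t ≤ S₀ := by
    intro t ht
    have hanti : AntitoneOn S (Set.Icc t₀ t) := by
      apply antitoneOn_of_deriv_nonpos (convex_Icc t₀ t)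
      · intro s hs
        exact (hS s hs.1).continuousAt.continuousWithinAt
      · intro s hs
        rw [interior_Icc] at hs
        exact (hS s hs.1.le).differentiableAt.differentiableWithinAt
      · intro s hs
        rw [interior_Icc] at hs
        rw [(hS s hs.1.le).deriv]
        have h1 : 0 ≤ ∑ i, β i * I i s :=
          Finset.sum_nonneg fun i _ => mul_nonneg (hβ i).le (hInn i s hs.1.le)
        have h2 : 0 ≤ S s := hSnn s hs.1.le
        nlinarith
    rw [hS₀def]
    exact hanti (Set.left_mem_Icc.2 ht) (Set.mem_Icc.2 ⟨ht, le_refl t⟩) ht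
  -- derivative of W and the key differential inequality
  have hWderiv : ∀ s ≥ t₀, HasDerivAt W
      (p * (J s * S s - σ * E s) + ∑ i, β i * (x i * σ * E s - γ i * I i s)) s := by
    intro s hs
    simp only [hWdef, hJdef]
    have h1 : HasDerivAt (fun t => p * E t) (p * ((∑ i, β i * I i s) * S s - σ * E s)) s :=
      (hE s hs).const_mul p
    have h2 : HasDerivAt (fun t => ∑ i, β i * I i t)
        (∑ i, β i * (x i * σ * E s - γ i * I i s)) s := by
      apply HasDerivAt.fun_sum
      intro i _
      exact (hI i s hs).const_mul (β i)
    exact h1.add h2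
  have hWineq : ∀ s ≥ t₀,
      p * (J s * S s - σ * E s) + ∑ i, β i * (x i * σ * E s - γ i * I i s) ≤ L * W s := by
    intro s hs
    have hsum_eq : ∑ i, β i * (x i * σ * E s - γ i * I i s)
        = σ * E s * b - ∑ i, β i * (γ i * I i s) := by
      have hb1 : σ * E s * b = ∑ i, β i * (x i * σ * E s) := by
        rw [hbdef, Finset.mul_sum]
        exact Finset.sum_congr rfl fun i _ => by ring
      rw [hb1, ← Finset.sum_sub_distrib]
      exact Finset.sum_congr rfl fun i _ => by ring
    have hT : γmin * J s ≤ ∑ i, β i * (γ i * I i s) := by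
      rw [hJdef, Finset.mul_sum]
      apply Finset.sum_le_sum
      intro i _
      have h1 : 0 ≤ β i * I i s := mul_nonneg (hβ i).le (hInn i s hs)
      calc γmin * (β i * I i s) ≤ γ i * (β i * I i s) :=
            mul_le_mul_of_nonneg_right (hγm_le i) h1
        _ = β i * (γ i * I i s) := by ring
    have hJS : p * (J s * S s) ≤ p * (J s * S₀) := by
      apply mul_le_mul_of_nonneg_left _ hp_pos.le
      exact mul_le_mul_of_nonneg_left (hSle s hs) (hJnn s hs)
    have e1 : p * (J s * S₀) = L * J s + γmin * J s := by
      have : p * (J s * S₀) = (p * S₀) * J s := by ring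
      rw [this, hpS0]; ring
    have e2 : σ * E s * b = L * (p * E s) + σ * (p * E s) := by
      have : σ * E s * b = (σ * b) * E s := by ring
      rw [this, hσb]; ring
    have e3 : L * W s = L * (p * E s) + L * J s := by
      simp only [hWdef]; ring
    rw [hsum_eq]
    linarith [hT, hJS, e1, e2, e3]
  -- Gronwall-type estimate : W t ≤ W t₀ * exp (L * (t - t₀))
  have hgron : ∀ t ≥ t₀, W t ≤ W t₀ * Real.exp (L * (t - t₀)) := by
    intro t ht
    set g : ℝ → ℝ := fun s => W s * Real.exp (-L * (s - t₀)) with hgdef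
    have hgderiv : ∀ s ≥ t₀, HasDerivAt g
        ((p * (J s * S s - σ * E s) + ∑ i, β i * (x i * σ * E s - γ i * I i s)
          - L * W s) * Real.exp (-L * (s - t₀))) s := by
      intro s hs
      have h1 := hWderiv s hs
      have h2 : HasDerivAt (fun u => Real.exp (-L * (u - t₀)))
          (Real.exp (-L * (s - t₀)) * (-L)) s := by
        have h3 : HasDerivAt (fun u : ℝ => -L * (u - t₀)) (-L) s := by
          simpa using ((hasDerivAt_id s).sub_const t₀).const_mul (-L)
        simpa [mul_comm] using h3.exp
      have := h1.fun_mul h2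
      refine this.congr_deriv ?_
      ring
    have hanti : AntitoneOn g (Set.Icc t₀ t) := by
      apply antitoneOn_of_deriv_nonpos (convex_Icc t₀ t)
      · intro s hs
        exact (hgderiv s hs.1).continuousAt.continuousWithinAt
      · intro s hs
        rw [interior_Icc] at hs
        exact (hgderiv s hs.1.le).differentiableAt.differentiableWithinAt
      · intro s hs
        rw [interior_Icc] at hs
        rw [(hgderiv s hs.1.le).deriv]
        apply mul_nonpos_of_nonpos_of_nonneg _ (Real.exp_nonneg _)
        have := hWineq s hs.1.le
        linarith
    have hgle : g t ≤ g t₀ := hanti (Set.left_mem_Icc.2 ht) (Set.mem_Icc.2 ⟨ht, le_refl t⟩) ht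
    have hg0 : g t₀ = W t₀ := by simp [hgdef]
    have hgt : W t = g t * Real.exp (L * (t - t₀)) := by
      rw [hgdef]
      rw [mul_assoc, ← Real.exp_add]
      simp
    rw [hgt, ← hg0]
    exact mul_le_mul_of_nonneg_right hgle (Real.exp_nonneg _)
  -- the final constant
  set K : ℝ := 1 / p + ∑ i, 1 / β i with hKdef
  have hK_pos : 0 < K := by
    have h1 : 0 < ∑ i : Fin N, 1 / β i :=
      Finset.sum_pos (fun i _ => one_div_pos.2 (hβ i)) Finset.univ_nonempty
    have h2 : 0 < 1 / p := one_div_pos.2 hp_pos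
    rw [hKdef]
    linarith
  set C : ℝ := K * W t₀ + 1 with hCdef
  have hWt0nn : 0 ≤ W t₀ := hWnn t₀ (le_refl t₀)
  have hC_pos : 0 < C := by
    have h1 : 0 ≤ K * W t₀ := mul_nonneg hK_pos.le hWt0nn
    rw [hCdef]
    linarith
  -- main bound
  have hmain : ∀ t ≥ t₀,
      Real.sqrt ((E t) ^ 2 + ∑ i, (I i t) ^ 2) ≤ C * Real.exp (L * (t - t₀)) := by
    intro t ht
    have hEt := hEnn t ht
    have hIt : ∀ i, 0 ≤ I i t := fun i => hInn i t ht
    have hsumnn : 0 ≤ ∑ i, I i t := Finset.sum_nonneg fun i _ => hIt i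
    -- sqrt step
    have step1 : Real.sqrt ((E t) ^ 2 + ∑ i, (I i t) ^ 2) ≤ E t + ∑ i, I i t := by
      have h1 : (E t) ^ 2 + ∑ i, (I i t) ^ 2 ≤ (E t + ∑ i, I i t) ^ 2 := by
        have h2 : ∑ i, (I i t) ^ 2 ≤ (∑ i, I i t) ^ 2 :=
          Finset.sum_sq_le_sq_sum_of_nonneg fun i _ => hIt i
        nlinarith [h2, mul_nonneg hEt hsumnn]
      calc Real.sqrt ((E t) ^ 2 + ∑ i, (I i t) ^ 2)
          ≤ Real.sqrt ((E t + ∑ i, I i t) ^ 2) := Real.sqrt_le_sqrt h1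
        _ = E t + ∑ i, I i t := Real.sqrt_sq (add_nonneg hEt hsumnn)
    -- linear step
    have hJt := hJnn t ht
    have hWt := hWnn t ht
    have hJleW : J t ≤ W t := by
      have h0 : 0 ≤ p * E t := mul_nonneg hp_pos.le hEt
      have hw : W t = p * E t + J t := by simp only [hWdef]
      linarith [hw, h0]
    have step2 : E t + ∑ i, I i t ≤ K * W t := by
      have hE2 : E t ≤ (1 / p) * W t := by
        rw [div_mul_eq_mul_div, le_div_iff₀ hp_pos]
        have hw : W t = p * E t + J t := by simp only [hWdef]
        have : E t * p = p * E t := mul_comm _ _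
        linarith [hJt, hw, this]
      have hI2 : ∀ i, I i t ≤ (1 / β i) * W t := by
        intro i
        have hsingle : β i * I i t ≤ J t := by
          rw [hJdef]
          exact Finset.single_le_sum (fun j _ => mul_nonneg (hβ j).le (hIt j))
            (Finset.mem_univ i)
        rw [div_mul_eq_mul_div, le_div_iff₀ (hβ i)]
        nlinarith [hJleW]
      calc E t + ∑ i, I i t ≤ (1 / p) * W t + ∑ i, (1 / β i) * W t := by
            apply add_le_add hE2
            exact Finset.sum_le_sum fun i _ => hI2 i
        _ = K * W t := by rw [hKdef, ← Finset.sum_mul, add_mul]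
    have step3 : K * W t ≤ K * (W t₀ * Real.exp (L * (t - t₀))) :=
      mul_le_mul_of_nonneg_left (hgron t ht) hK_pos.le
    have step4 : K * (W t₀ * Real.exp (L * (t - t₀))) ≤ C * Real.exp (L * (t - t₀)) := by
      rw [← mul_assoc]
      apply mul_le_mul_of_nonneg_right _ (Real.exp_nonneg _)
      rw [hCdef]; linarith
    linarith
  -- limit of the bound
  have hCexp0 : Tendsto (fun t => C * Real.exp (L * (t - t₀))) atTop (nhds 0) := by
    have h1 : Tendsto (fun t : ℝ => t - t₀) atTop atTop :=
      tendsto_atTop_add_const_right atTop (-t₀) tendsto_id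
    have h2 : Tendsto (fun t : ℝ => L * (t - t₀)) atTop atBot :=
      (tendsto_const_mul_atBot_of_neg hL_neg).2 h1
    have h3 : Tendsto (fun t : ℝ => Real.exp (L * (t - t₀))) atTop (nhds 0) :=
      Real.tendsto_exp_atBot.comp h2
    have := h3.const_mul C
    simpa using this
  refine ⟨hL_neg, ⟨C, hC_pos, hmain⟩, ?_, ?_⟩
  · apply squeeze_zero' (g := fun t => C * Real.exp (L * (t - t₀)))
      (Filter.eventually_atTop.2 ⟨t₀, fun t ht => hEnn t ht⟩) _ hCexp0
    apply Filter.eventually_atTop.2 ⟨t₀, fun t ht => ?_⟩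
    calc E t = Real.sqrt ((E t) ^ 2) := (Real.sqrt_sq (hEnn t ht)).symm
      _ ≤ Real.sqrt ((E t) ^ 2 + ∑ i, (I i t) ^ 2) := by
          apply Real.sqrt_le_sqrt
          have : 0 ≤ ∑ i, (I i t) ^ 2 := Finset.sum_nonneg fun i _ => sq_nonneg _
          linarith
      _ ≤ C * Real.exp (L * (t - t₀)) := hmain t ht
  · intro i
    apply squeeze_zero' (g := fun t => C * Real.exp (L * (t - t₀)))
      (Filter.eventually_atTop.2 ⟨t₀, fun t ht => hInn i t ht⟩) _ hCexp0
    apply Filter.eventually_atTop.2 ⟨t₀, fun t ht => ?_⟩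
    calc I i t = Real.sqrt ((I i t) ^ 2) := (Real.sqrt_sq (hInn i t ht)).symm
      _ ≤ Real.sqrt ((E t) ^ 2 + ∑ j, (I j t) ^ 2) := by
          apply Real.sqrt_le_sqrt
          have h2 : (I i t) ^ 2 ≤ ∑ j, (I j t) ^ 2 :=
            Finset.single_le_sum (f := fun j => (I j t) ^ 2)
              (fun j _ => sq_nonneg _) (Finset.mem_univ i)
          nlinarith [sq_nonneg (E t)]
      _ ≤ C * Real.exp (L * (t - t₀)) := hmain t ht
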